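/- Let D1, D2, D3 be events that are increasing (monotone) Boolean functions of independent Bernoulli variables x2,...,xn, and let x1 be an independent Bernoulli variable with probability p1. Define φ = (x1 ∧ D1) ∨ (x1 ∧ D2) ∨ D3 and φ' = (x1 ∧ D1) ∨ (x1' ∧ D2) ∨ D3 where x1' is a fresh independent Bernoulli variable with the same probability p1. Then P[φ'] − P[φ] = p1(1 − p1)·(P[D1 ∧ D2] − P[D1 ∧ D2 ∧ D3]) ≥ 0. -/
import Mathlib


open MeasureTheory ProbabilityTheory MeasurableSpace

/-- With `x1` (event `A`) and its fresh independent copy `x1'` (event `A'`)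
both of probability `p1`, and events `D1, D2, D3` independent of them, for
`φ = (x1 ∧ D1) ∨ (x1 ∧ D2) ∨ D3` and `φ' = (x1 ∧ D1) ∨ (x1' ∧ D2) ∨ D3` we have
`P[φ'] − P[φ] = p1(1 − p1)·(P[D1 ∧ D2] − P[D1 ∧ D2 ∧ D3]) ≥ 0`. -/
theorem single_step_dissociation_difference
    {Ω : Type*} [MeasurableSpace Ω] (μ : Measure Ω) [IsProbabilityMeasure μ]
    (A A' D1 D2 D3 : Set Ω)
    (hA : MeasurableSet A) (hA' : MeasurableSet A')
    (hD1 : MeasurableSet D1) (hD2 : MeasurableSet D2) (hD3 : MeasurableSet D3)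
    (p1 : ℝ) (hp : (μ A).toReal = p1) (hp' : (μ A').toReal = p1)
    (hIndep : iIndep
      (fun i : Fin 3 =>
        if i = 0 then generateFrom {A}
        else if i = 1 then generateFrom {A'}
        else generateFrom {D1, D2, D3}) μ) :
    (μ ((A ∩ D1) ∪ (A' ∩ D2) ∪ D3)).toReal - (μ ((A ∩ D1) ∪ (A ∩ D2) ∪ D3)).toReal
        = p1 * (1 - p1) * ((μ (D1 ∩ D2)).toReal - (μ (D1 ∩ D2 ∩ D3)).toReal) ∧
    0 ≤ p1 * (1 - p1) * ((μ (D1 ∩ D2)).toReal - (μ (D1 ∩ D2 ∩ D3)).toReal) := by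
  classical
  have hIndep' := (iIndep_iff _ μ).mp hIndep
  set m : MeasurableSpace Ω := generateFrom {D1, D2, D3} with hm
  -- independence facts
  have keyA : ∀ E : Set Ω, MeasurableSet[m] E → μ (A ∩ E) = μ A * μ E := by
    intro E hE
    have h := hIndep' {0, 2} (f := fun i => if i = 0 then A else if i = 1 then A' else E) ?_
    · simpa using h
    · intro i hi
      fin_cases i
      · simp only [Fin.reduceEq, reduceIte]; exact measurableSet_generateFrom rfl
      · simp at hi
      · simp only [Fin.reduceEq, reduceIte]; exact hE
  have keyA' : ∀ E : Set Ω, MeasurableSet[m] E → μ (A' ∩ E) = μ A' * μ E := by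
    intro E hE
    have h := hIndep' {1, 2} (f := fun i => if i = 0 then A else if i = 1 then A' else E) ?_
    · simpa using h
    · intro i hi
      fin_cases i
      · simp at hi
      · simp only [Fin.reduceEq, reduceIte]; exact measurableSet_generateFrom rfl
      · simp only [Fin.reduceEq, reduceIte]; exact hE
  have keyAA' : ∀ E : Set Ω, MeasurableSet[m] E →
      μ (A ∩ (A' ∩ E)) = μ A * (μ A' * μ E) := by
    intro E hE
    have h := hIndep' {0, 1, 2} (f := fun i => if i = 0 then A else if i = 1 then A' else E) ?_
    · simpa using h
    · intro i hi
      fin_cases i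
      · simp only [Fin.reduceEq, reduceIte]; exact measurableSet_generateFrom rfl
      · simp only [Fin.reduceEq, reduceIte]; exact measurableSet_generateFrom rfl
      · simp only [Fin.reduceEq, reduceIte]; exact hE
  -- measurability in m
  have mD1 : MeasurableSet[m] D1 := measurableSet_generateFrom (by simp)
  have mD2 : MeasurableSet[m] D2 := measurableSet_generateFrom (by simp)
  have mD3 : MeasurableSet[m] D3 := measurableSet_generateFrom (by simp)
  -- set identities
  have hφ : (A ∩ D1) ∪ (A ∩ D2) ∪ D3 = (A ∩ ((D1 ∪ D2) ∩ D3ᶜ)) ∪ D3 := by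
    ext x; simp only [Set.mem_union, Set.mem_inter_iff, Set.mem_compl_iff]; tauto
  have hφ' : (A ∩ D1) ∪ (A' ∩ D2) ∪ D3
      = ((A ∩ (D1 ∩ D3ᶜ)) ∪ (A' ∩ (D2 ∩ D3ᶜ))) ∪ D3 := by
    ext x; simp only [Set.mem_union, Set.mem_inter_iff, Set.mem_compl_iff]; tauto
  have hdisj1 : Disjoint (A ∩ ((D1 ∪ D2) ∩ D3ᶜ)) D3 := by
    refine Disjoint.mono_left ?_ disjoint_compl_left
    exact fun x hx => hx.2.2
  have hdisj2 : Disjoint ((A ∩ (D1 ∩ D3ᶜ)) ∪ (A' ∩ (D2 ∩ D3ᶜ))) D3 := by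
    refine Disjoint.mono_left ?_ disjoint_compl_left
    rintro x (hx | hx) <;> exact hx.2.2
  -- measures of φ and φ'
  have h1 : μ ((A ∩ D1) ∪ (A ∩ D2) ∪ D3)
      = μ A * μ ((D1 ∪ D2) ∩ D3ᶜ) + μ D3 := by
    rw [hφ, measure_union hdisj1 hD3, keyA _ ((mD1.union mD2).inter mD3.compl)]
  have h2 : μ ((A ∩ D1) ∪ (A' ∩ D2) ∪ D3)
      = μ ((A ∩ (D1 ∩ D3ᶜ)) ∪ (A' ∩ (D2 ∩ D3ᶜ))) + μ D3 := by
    rw [hφ', measure_union hdisj2 hD3]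
  -- inclusion-exclusion for the union inside φ'
  have h3 := measure_union_add_inter (μ := μ) (A ∩ (D1 ∩ D3ᶜ))
    (hA'.inter (hD2.inter hD3.compl))
  have hiset : (A ∩ (D1 ∩ D3ᶜ)) ∩ (A' ∩ (D2 ∩ D3ᶜ)) = A ∩ (A' ∩ (D1 ∩ D2 ∩ D3ᶜ)) := by
    ext x; simp only [Set.mem_inter_iff, Set.mem_compl_iff]; tauto
  rw [hiset, keyAA' _ ((mD1.inter mD2).inter mD3.compl),
    keyA _ (mD1.inter mD3.compl), keyA' _ (mD2.inter mD3.compl)] at h3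
  -- inclusion-exclusion for (D1 ∪ D2) ∩ D3ᶜ
  have h4 := measure_union_add_inter (μ := μ) (D1 ∩ D3ᶜ) (hD2.inter hD3.compl)
  have huset : (D1 ∩ D3ᶜ) ∪ (D2 ∩ D3ᶜ) = (D1 ∪ D2) ∩ D3ᶜ := by
    ext x; simp only [Set.mem_union, Set.mem_inter_iff, Set.mem_compl_iff]; tauto
  have hiset2 : (D1 ∩ D3ᶜ) ∩ (D2 ∩ D3ᶜ) = D1 ∩ D2 ∩ D3ᶜ := by
    ext x; simp only [Set.mem_inter_iff, Set.mem_compl_iff]; tauto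
  rw [huset, hiset2] at h4
  -- split D1 ∩ D2 along D3
  have h5 := measure_inter_add_diff (μ := μ) (D1 ∩ D2) hD3
  rw [Set.diff_eq] at h5
  -- pass to real numbers
  have fin : ∀ s : Set Ω, μ s ≠ ⊤ := fun s => measure_ne_top μ s
  set a := p1 with ha
  have R1 : (μ ((A ∩ D1) ∪ (A ∩ D2) ∪ D3)).toReal
      = a * (μ ((D1 ∪ D2) ∩ D3ᶜ)).toReal + (μ D3).toReal := by
    rw [h1, ENNReal.toReal_add (by finiteness) (fin _), ENNReal.toReal_mul, hp]
  have R2 : (μ ((A ∩ D1) ∪ (A' ∩ D2) ∪ D3)).toReal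
      = (μ ((A ∩ (D1 ∩ D3ᶜ)) ∪ (A' ∩ (D2 ∩ D3ᶜ)))).toReal + (μ D3).toReal := by
    rw [h2, ENNReal.toReal_add (fin _) (fin _)]
  have R3 : (μ ((A ∩ (D1 ∩ D3ᶜ)) ∪ (A' ∩ (D2 ∩ D3ᶜ)))).toReal
      + a * (a * (μ (D1 ∩ D2 ∩ D3ᶜ)).toReal)
      = a * (μ (D1 ∩ D3ᶜ)).toReal + a * (μ (D2 ∩ D3ᶜ)).toReal := by
    have := congrArg ENNReal.toReal h3
    rwa [ENNReal.toReal_add (fin _) (by finiteness),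
      ENNReal.toReal_add (by finiteness) (by finiteness),
      ENNReal.toReal_mul, ENNReal.toReal_mul, ENNReal.toReal_mul, ENNReal.toReal_mul,
      hp, hp'] at this
  have R4 : (μ ((D1 ∪ D2) ∩ D3ᶜ)).toReal + (μ (D1 ∩ D2 ∩ D3ᶜ)).toReal
      = (μ (D1 ∩ D3ᶜ)).toReal + (μ (D2 ∩ D3ᶜ)).toReal := by
    have := congrArg ENNReal.toReal h4
    rwa [ENNReal.toReal_add (fin _) (fin _), ENNReal.toReal_add (fin _) (fin _)] at this
  have R5 : (μ (D1 ∩ D2 ∩ D3)).toReal + (μ (D1 ∩ D2 ∩ D3ᶜ)).toReal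
      = (μ (D1 ∩ D2)).toReal := by
    have := congrArg ENNReal.toReal h5
    rwa [ENNReal.toReal_add (fin _) (fin _)] at this
  have ha0 : 0 ≤ a := hp ▸ ENNReal.toReal_nonneg
  have ha1 : a ≤ 1 := by
    rw [← hp]
    exact ENNReal.toReal_le_of_le_ofReal zero_le_one (by simpa using prob_le_one (μ := μ) (s := A))
  have hmono : (μ (D1 ∩ D2 ∩ D3)).toReal ≤ (μ (D1 ∩ D2)).toReal :=
    ENNReal.toReal_mono (fin _) (measure_mono Set.inter_subset_left)
  constructor
  · rw [R1, R2]; linear_combination R3 - a * R4 + (a * (1 - a)) * R5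
  · have : 0 ≤ (μ (D1 ∩ D2)).toReal - (μ (D1 ∩ D2 ∩ D3)).toReal := by linarith
    have h01 : 0 ≤ a * (1 - a) := mul_nonneg ha0 (by linarith)
    exact mul_nonneg h01 this
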